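/- The single-variable integral for I_yy evaluates as ∫_{−2π/3}^{2π/3} (542 cos t + 322 cos 2t + 122 cos 3t + 21 cos 4t + 361)·tan²(t/2) / (240·√(2 cos t + 1)) dt = (71/45)·E(3/4) − (19/90)·K(3/4), where K(m) = ∫₀^{π/2} 1/√(1 − m sin²θ) dθ and E(m) = ∫₀^{π/2} √(1 − m sin²θ) dθ. -/

import Mathlib

open Real

/-- Complete elliptic integral of the first kind. -/
noncomputable def ellipticK (m : ℝ) : ℝ :=
  ∫ θ in (0:ℝ)..(π/2), 1 / Real.sqrt (1 - m * Real.sin θ ^ 2)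

/-- Complete elliptic integral of the second kind. -/
noncomputable def ellipticE (m : ℝ) : ℝ :=
  ∫ θ in (0:ℝ)..(π/2), Real.sqrt (1 - m * Real.sin θ ^ 2)

namespace OloidAux

open Set MeasureTheory intervalIntegral

noncomputable def f0 (t : ℝ) : ℝ :=
  (542 * Real.cos t + 322 * Real.cos (2*t) + 122 * Real.cos (3*t) +
      21 * Real.cos (4*t) + 361) * Real.tan (t/2) ^ 2 /
    (240 * Real.sqrt (2 * Real.cos t + 1))

noncomputable def g0 (θ : ℝ) : ℝ :=
  71/45 * Real.sqrt (1 - 3/4 * Real.sin θ ^ 2) -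
    19/90 * (1 / Real.sqrt (1 - 3/4 * Real.sin θ ^ 2))

noncomputable def ph0 (t : ℝ) : ℝ := Real.arcsin (2 / Real.sqrt 3 * Real.sin (t/2))

noncomputable def A0 (t : ℝ) : ℝ :=
  -(2/3) * (Real.sin (t/2) / Real.cos (t/2)) +
    Real.sin (t/2) * Real.cos (t/2) *
      (-(11/45) + 32/15 * Real.sin (t/2)^2 - 8/5 * Real.sin (t/2)^4)

noncomputable def Fc (t : ℝ) : ℝ := A0 t * Real.sqrt (2 * Real.cos t + 1)

noncomputable def W0 (t : ℝ) : ℝ :=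
  2 * (∫ s in (0:ℝ)..t, f0 s) - (∫ θ in (0:ℝ)..(ph0 t), g0 θ) - Fc t

lemma g0_denom_le (θ : ℝ) : (1:ℝ)/4 ≤ 1 - 3/4 * Real.sin θ ^ 2 := by
  nlinarith [Real.sin_sq_le_one θ]

lemma g0_sqrt_pos (θ : ℝ) : 0 < Real.sqrt (1 - 3/4 * Real.sin θ ^ 2) :=
  Real.sqrt_pos.2 (by linarith [g0_denom_le θ])

lemma g0_cont : Continuous g0 := by
  have h1 : Continuous fun θ : ℝ => Real.sqrt (1 - 3/4 * Real.sin θ ^ 2) :=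
    Real.continuous_sqrt.comp (by continuity)
  apply ((continuous_const.mul h1).sub (continuous_const.mul (continuous_const.div h1
    (fun θ => (g0_sqrt_pos θ).ne'))))

lemma cos_half_ge {t : ℝ} (h0 : 0 ≤ t) (h1 : t ≤ 2*π/3) : 1/2 ≤ Real.cos (t/2) := by
  have hπ := Real.pi_pos
  rw [← Real.cos_pi_div_three]
  exact Real.cos_le_cos_of_nonneg_of_le_pi (by positivity) (by nlinarith) (by nlinarith)

lemma coslb {t : ℝ} (h0 : 0 ≤ t) (h1 : t ≤ 2*π/3) :
    (2*π/3 - t)/π ≤ 2 * Real.cos t + 1 := by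
  have hπ := Real.pi_pos
  have hcos2 : 2 * Real.cos t + 1 = (2*Real.cos (t/2) - 1) * (2*Real.cos (t/2) + 1) := by
    have h := Real.cos_two_mul (t/2)
    rw [show 2*(t/2) = t by ring] at h
    rw [h]; ring
  have hsub := Real.cos_sub_cos (t/2) (π/3)
  have hfac : 2*Real.cos (t/2) - 1 =
      4 * Real.sin ((t/2+π/3)/2) * Real.sin ((π/3 - t/2)/2) := by
    rw [Real.cos_pi_div_three] at hsub
    have hneg : Real.sin ((t/2 - π/3)/2) = - Real.sin ((π/3 - t/2)/2) := by
      rw [show (t/2 - π/3)/2 = -((π/3 - t/2)/2) by ring, Real.sin_neg]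
    rw [hneg] at hsub
    linarith
  have ha : 2/π * ((t/2+π/3)/2) ≤ Real.sin ((t/2+π/3)/2) :=
    Real.mul_le_sin (by positivity) (by nlinarith)
  have hb : 2/π * ((π/3 - t/2)/2) ≤ Real.sin ((π/3 - t/2)/2) :=
    Real.mul_le_sin (by nlinarith [mul_pos (show (0:ℝ) < 2/π by positivity) hπ]) (by nlinarith)
  have hb0 : 0 ≤ Real.sin ((π/3 - t/2)/2) :=
    Real.sin_nonneg_of_nonneg_of_le_pi (by nlinarith) (by nlinarith)
  have ha' : 1/3 ≤ Real.sin ((t/2+π/3)/2) := by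
    refine le_trans ?_ ha
    rw [div_mul_eq_mul_div, le_div_iff₀ hπ]
    nlinarith
  have hchalf := cos_half_ge h0 h1
  have hsa2c : 2/3 ≤ Real.sin ((t/2+π/3)/2) * (2*Real.cos (t/2) + 1) := by
    have := mul_le_mul ha' (show (2:ℝ) ≤ 2*Real.cos (t/2) + 1 by linarith)
      (by norm_num) (by linarith)
    linarith
  have h1' : (8:ℝ)/3 * Real.sin ((π/3 - t/2)/2) ≤ 2*Real.cos t + 1 := by
    rw [hcos2, hfac]
    nlinarith [mul_le_mul_of_nonneg_left hsa2c (mul_nonneg (show (0:ℝ) ≤ 4 by norm_num) hb0)]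
  have hbb : 2*((π/3 - t/2)/2) ≤ π * Real.sin ((π/3 - t/2)/2) := by
    have h := mul_le_mul_of_nonneg_left hb hπ.le
    have heq : π * (2/π * ((π/3 - t/2)/2)) = 2*((π/3 - t/2)/2) := by field_simp
    linarith [heq ▸ h]
  rw [div_le_iff₀ hπ]
  nlinarith [mul_le_mul_of_nonneg_left h1' hπ.le]

lemma q_pos {t : ℝ} (h0 : 0 ≤ t) (hb : t < 2*π/3) : 0 < 2 * Real.cos t + 1 := by
  have hπ := Real.pi_pos
  exact lt_of_lt_of_le (div_pos (by linarith) hπ) (coslb h0 hb.le)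

lemma cos_half_pos {t : ℝ} (h0 : 0 ≤ t) (h1 : t ≤ 2*π/3) : 0 < Real.cos (t/2) := by
  apply Real.cos_pos_of_mem_Ioo
  constructor
  · nlinarith [Real.pi_pos]
  · nlinarith [Real.pi_pos]

lemma f0_contAt {t : ℝ} (h0 : 0 ≤ t) (hb : t < 2*π/3) : ContinuousAt f0 t := by
  have hc : Real.cos (t/2) ≠ 0 := (cos_half_pos h0 hb.le).ne'
  have hq : (0:ℝ) < 2*Real.cos t + 1 := q_pos h0 hb
  have htan : ContinuousAt (fun u : ℝ => Real.tan (u/2)) t := by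
    simp only [Real.tan_eq_sin_div_cos]
    exact ((Real.continuous_sin.comp (continuous_id.div_const 2)).continuousAt).div
      ((Real.continuous_cos.comp (continuous_id.div_const 2)).continuousAt) hc
  apply ContinuousAt.div
  · exact ((by fun_prop : Continuous fun u : ℝ => 542 * Real.cos u + 322 * Real.cos (2*u) +
      122 * Real.cos (3*u) + 21 * Real.cos (4*u) + 361).continuousAt).mul (htan.pow 2)
  · exact (continuous_const.mul (Real.continuous_sqrt.comp (by continuity))).continuousAt
  · positivity

lemma f0_meas : Measurable f0 := by
  have htan : Measurable fun t : ℝ => Real.tan (t/2) := by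
    simp only [Real.tan_eq_sin_div_cos]
    exact (Real.measurable_sin.comp (measurable_id.div_const 2)).div
      (Real.measurable_cos.comp (measurable_id.div_const 2))
  apply Measurable.div
  · exact (by fun_prop : Measurable fun t : ℝ => 542 * Real.cos t + 322 * Real.cos (2*t) +
      122 * Real.cos (3*t) + 21 * Real.cos (4*t) + 361).mul (htan.pow_const 2)
  · fun_prop

lemma f0_intble : IntervalIntegrable f0 volume 0 (2*π/3) := by
  have hb0 : (0:ℝ) < 2*π/3 := by positivity
  have hπ := Real.pi_pos
  have hg : IntervalIntegrable
      (fun t : ℝ => 5472/240 * Real.sqrt π * ((2*π/3 - t) ^ (-(1/2) : ℝ)))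
      volume 0 (2*π/3) := by
    apply IntervalIntegrable.const_mul
    have h := (intervalIntegrable_rpow' (a := 0) (b := 2*π/3) (r := -(1/2))
      (by norm_num)).comp_sub_left (2*π/3)
    simpa using h.symm
  apply hg.mono_fun f0_meas.aestronglyMeasurable.restrict
  rw [uIoc_of_le hb0.le]
  filter_upwards [ae_restrict_mem measurableSet_Ioc] with t ht
  rcases eq_or_lt_of_le ht.2 with heq | hlt
  · have h1 : Real.cos (2*π/3) = -(1/2) := by
      rw [show (2:ℝ)*π/3 = π - π/3 by ring, Real.cos_pi_sub, Real.cos_pi_div_three]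
    have : f0 t = 0 := by
      rw [heq, f0, h1]
      norm_num
    rw [this, heq]
    simp [Real.zero_rpow]
  · -- t < 2π/3
    have h0 : (0:ℝ) ≤ t := ht.1.le
    have hu : (0:ℝ) < 2*π/3 - t := by linarith
    have hq : (0:ℝ) < 2*Real.cos t + 1 := q_pos h0 hlt
    have hr : 0 < Real.sqrt (2*Real.cos t + 1) := Real.sqrt_pos.2 hq
    have hrl : Real.sqrt (2*π/3 - t) / Real.sqrt π ≤ Real.sqrt (2*Real.cos t + 1) := by
      rw [← Real.sqrt_div hu.le]
      exact Real.sqrt_le_sqrt (coslb h0 hlt.le)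
    have hc12 := cos_half_ge h0 hlt.le
    have htan : Real.tan (t/2)^2 ≤ 4 := by
      rw [Real.tan_eq_sin_div_cos, div_pow]
      rw [div_le_iff₀ (by positivity)]
      nlinarith [Real.sin_sq_le_one (t/2), Real.cos_sq_le_one (t/2)]
    have htan0 : 0 ≤ Real.tan (t/2)^2 := sq_nonneg _
    have hP : |542 * Real.cos t + 322 * Real.cos (2*t) + 122 * Real.cos (3*t) +
        21 * Real.cos (4*t) + 361| ≤ 1368 := by
      have := Real.neg_one_le_cos t
      have := Real.cos_le_one t
      have := Real.neg_one_le_cos (2*t)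
      have := Real.cos_le_one (2*t)
      have := Real.neg_one_le_cos (3*t)
      have := Real.cos_le_one (3*t)
      have := Real.neg_one_le_cos (4*t)
      have := Real.cos_le_one (4*t)
      rw [abs_le]
      constructor <;> nlinarith
    have hnum : |(542 * Real.cos t + 322 * Real.cos (2*t) + 122 * Real.cos (3*t) +
        21 * Real.cos (4*t) + 361) * Real.tan (t/2) ^ 2| ≤ 5472 := by
      rw [abs_mul, abs_of_nonneg htan0]
      nlinarith [abs_nonneg (542 * Real.cos t + 322 * Real.cos (2*t) + 122 * Real.cos (3*t) +
        21 * Real.cos (4*t) + 361)]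
    have hrpow : (2*π/3 - t) ^ (-(1/2) : ℝ) = 1 / Real.sqrt (2*π/3 - t) := by
      rw [Real.rpow_neg hu.le, Real.sqrt_eq_rpow, one_div]
      norm_num
    have hsq : 0 < Real.sqrt (2*π/3 - t) := Real.sqrt_pos.2 hu
    have hsπ : 0 < Real.sqrt π := Real.sqrt_pos.2 hπ
    have hgoal : |(542 * Real.cos t + 322 * Real.cos (2*t) + 122 * Real.cos (3*t) +
          21 * Real.cos (4*t) + 361) * Real.tan (t/2) ^ 2| / (240 * Real.sqrt (2*Real.cos t + 1))
        ≤ 5472/240 * Real.sqrt π * (1 / Real.sqrt (2*π/3 - t)) := by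
      have hd1 : (0:ℝ) < 240 * (Real.sqrt (2*π/3 - t) / Real.sqrt π) := by positivity
      have hd2 : 240 * (Real.sqrt (2*π/3 - t) / Real.sqrt π)
          ≤ 240 * Real.sqrt (2*Real.cos t + 1) := by nlinarith
      have hdd := div_le_div₀ (by norm_num : (0:ℝ) ≤ 5472) hnum hd1 hd2
      refine hdd.trans (le_of_eq ?_)
      field_simp
    have habs : (0:ℝ) ≤ 240 * Real.sqrt (2*Real.cos t + 1) := by positivity
    have hf0eq : ‖f0 t‖ = |(542 * Real.cos t + 322 * Real.cos (2*t) + 122 * Real.cos (3*t) +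
        21 * Real.cos (4*t) + 361) * Real.tan (t/2) ^ 2| /
          (240 * Real.sqrt (2*Real.cos t + 1)) := by
      unfold f0
      rw [Real.norm_eq_abs, abs_div, abs_of_nonneg habs]
    rw [hf0eq]
    refine hgoal.trans (le_of_eq ?_)
    rw [Real.norm_eq_abs, abs_of_nonneg (by positivity), hrpow]

lemma f0_even (t : ℝ) : f0 (-t) = f0 t := by
  have h : ∀ x : ℝ, Real.tan (-x/2) ^ 2 = Real.tan (x/2) ^ 2 := by
    intro x
    rw [show -x/2 = -(x/2) by ring, Real.tan_neg]
    ring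
  simp only [f0, Real.cos_neg, h,
    show ∀ x : ℝ, 2 * -x = -(2*x) from fun x => by ring,
    show ∀ x : ℝ, 3 * -x = -(3*x) from fun x => by ring,
    show ∀ x : ℝ, 4 * -x = -(4*x) from fun x => by ring]

set_option maxHeartbeats 2000000 in
lemma hasDeriv_W : ∀ t ∈ Ico (0:ℝ) (2*π/3), HasDerivAt W0 0 t := by
  intro t ht
  obtain ⟨ht0, htb⟩ := ht
  have hπ := Real.pi_pos
  have hc : 0 < Real.cos (t/2) := cos_half_pos ht0 htb.le
  have hq : (0:ℝ) < 2*Real.cos t + 1 := q_pos ht0 htb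
  have hr : 0 < Real.sqrt (2*Real.cos t + 1) := Real.sqrt_pos.2 hq
  have h3 : (0:ℝ) < Real.sqrt 3 := by positivity
  have hw2 : Real.sqrt 3 ^ 2 = 3 := Real.sq_sqrt (by norm_num)
  have hs0 : 0 ≤ Real.sin (t/2) :=
    Real.sin_nonneg_of_nonneg_of_le_pi (by positivity) (by nlinarith)
  have hslt : Real.sin (t/2) < Real.sqrt 3 / 2 := by
    rw [← Real.sin_pi_div_three]
    exact Real.strictMonoOn_sin ⟨by nlinarith, by nlinarith⟩
      ⟨by nlinarith, by nlinarith⟩ (by nlinarith)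
  have hu1 : 2 / Real.sqrt 3 * Real.sin (t/2) < 1 := by
    rw [div_mul_eq_mul_div, div_lt_one h3]
    nlinarith
  have hu0 : 0 ≤ 2 / Real.sqrt 3 * Real.sin (t/2) := by positivity
  -- FTC part for the f0 primitive
  have hI : HasDerivAt (fun u => ∫ s in (0:ℝ)..u, f0 s) (f0 t) t := by
    apply intervalIntegral.integral_hasDerivAt_right (f0_intble.mono_set' ?_)
      f0_meas.stronglyMeasurable.stronglyMeasurableAtFilter (f0_contAt ht0 htb)
    rw [uIoc_of_le ht0, uIoc_of_le (by positivity : (0:ℝ) ≤ 2*π/3)]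
    exact Ioc_subset_Ioc_right htb.le
  -- derivative of u ↦ sin(u/2), cos(u/2)
  have hhalf : HasDerivAt (fun u : ℝ => u/2) (1/2 : ℝ) t := by
    simpa using (hasDerivAt_id t).div_const 2
  have hsin2 : HasDerivAt (fun u : ℝ => Real.sin (u/2)) (Real.cos (t/2) * (1/2)) t := by
    simpa [Function.comp_def] using (Real.hasDerivAt_sin (t/2)).comp t hhalf
  have hcos2 : HasDerivAt (fun u : ℝ => Real.cos (u/2)) (-Real.sin (t/2) * (1/2)) t := by
    simpa [Function.comp_def] using (Real.hasDerivAt_cos (t/2)).comp t hhalf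
  -- derivative of ph0
  have hinner : HasDerivAt (fun u : ℝ => 2 / Real.sqrt 3 * Real.sin (u/2))
      (2 / Real.sqrt 3 * (Real.cos (t/2) * (1/2))) t := hsin2.const_mul _
  have hne1 : 2 / Real.sqrt 3 * Real.sin (t/2) ≠ -1 := by nlinarith
  have hArc : HasDerivAt ph0
      ((1 / Real.sqrt (1 - (2 / Real.sqrt 3 * Real.sin (t/2))^2)) *
        (2 / Real.sqrt 3 * (Real.cos (t/2) * (1/2)))) t := by
    rw [show ph0 = fun u => Real.arcsin (2 / Real.sqrt 3 * Real.sin (u/2)) from rfl]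
    simpa [Function.comp_def] using
      (Real.hasDerivAt_arcsin hne1 hu1.ne).comp t hinner
  have hB0 : HasDerivAt (fun θ => ∫ x in (0:ℝ)..θ, g0 x) (g0 (ph0 t)) (ph0 t) :=
    intervalIntegral.integral_hasDerivAt_right (g0_cont.intervalIntegrable _ _)
      g0_cont.measurable.stronglyMeasurable.stronglyMeasurableAtFilter
      g0_cont.continuousAt
  have hB : HasDerivAt (fun u => ∫ x in (0:ℝ)..(ph0 u), g0 x)
      (g0 (ph0 t) * ((1 / Real.sqrt (1 - (2 / Real.sqrt 3 * Real.sin (t/2))^2)) *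
        (2 / Real.sqrt 3 * (Real.cos (t/2) * (1/2))))) t := by
    simpa [Function.comp_def] using hB0.comp t hArc
  -- derivative of A0
  have hdiv := hsin2.div hcos2 hc.ne'
  have hpoly := (((hsin2.pow 2).const_mul (32/15 : ℝ)).const_add (-(11/45) : ℝ)).sub
    ((hsin2.pow 4).const_mul (8/5 : ℝ))
  have hA : HasDerivAt A0
      ((-(2/3) * ((Real.cos (t/2) * (1/2) * Real.cos (t/2) -
          Real.sin (t/2) * (-Real.sin (t/2) * (1/2))) / Real.cos (t/2) ^ 2)) +
        ((Real.cos (t/2) * (1/2) * Real.cos (t/2) +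
            Real.sin (t/2) * (-Real.sin (t/2) * (1/2))) *
          (-(11/45) + 32/15 * Real.sin (t/2)^2 - 8/5 * Real.sin (t/2)^4) +
          Real.sin (t/2) * Real.cos (t/2) *
            (32/15 * (↑2 * Real.sin (t/2) ^ (2-1) * (Real.cos (t/2) * (1/2))) -
              8/5 * (↑4 * Real.sin (t/2) ^ (4-1) * (Real.cos (t/2) * (1/2)))))) t := by
    exact (hdiv.const_mul _).add ((hsin2.mul hcos2).mul hpoly)
  -- derivative of sqrt(2 cos + 1)
  have hq' : HasDerivAt (fun u : ℝ => 2*Real.cos u + 1) (2 * -Real.sin t) t :=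
    ((Real.hasDerivAt_cos t).const_mul 2).add_const 1
  have hsqrtc : HasDerivAt (fun u : ℝ => Real.sqrt (2*Real.cos u + 1))
      (1/(2 * Real.sqrt (2*Real.cos t + 1)) * (2 * -Real.sin t)) t := by
    simpa [Function.comp_def] using (Real.hasDerivAt_sqrt hq.ne').comp t hq'
  have hFc : HasDerivAt Fc _ t := hA.mul hsqrtc
  have hW := ((hI.const_mul (2:ℝ)).sub hB).sub hFc
  have hW' : HasDerivAt W0 _ t := hW
  convert hW' using 1
  rw [eq_comm]
  -- now prove the derivative expression is zero
  unfold f0 g0 A0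
  have hcs := Real.sin_sq_add_cos_sq (t/2)
  have hsin_arc : Real.sin (ph0 t) = 2 / Real.sqrt 3 * Real.sin (t/2) :=
    Real.sin_arcsin (by linarith) hu1.le
  have hcost : Real.cos t = 1 - 2 * Real.sin (t/2)^2 := by
    have h := Real.cos_two_mul (t/2)
    rw [show 2*(t/2) = t by ring] at h
    rw [h]; linarith
  have hsint : Real.sin t = 2 * Real.sin (t/2) * Real.cos (t/2) := by
    have h := Real.sin_two_mul (t/2)
    rw [show 2*(t/2) = t by ring] at h
    rw [h]
  have hsqrtc2 : Real.sqrt (1 - 3/4 * Real.sin (ph0 t)^2) = Real.cos (t/2) := by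
    rw [hsin_arc, show 1 - 3/4 * (2/Real.sqrt 3 * Real.sin (t/2))^2 = Real.cos (t/2)^2 by
      field_simp
      nlinarith [hw2, hcs]]
    exact Real.sqrt_sq hc.le
  have hsqrtu : Real.sqrt (1 - (2/Real.sqrt 3 * Real.sin (t/2))^2)
      = Real.sqrt (2*Real.cos t + 1) / Real.sqrt 3 := by
    rw [show 1 - (2/Real.sqrt 3 * Real.sin (t/2))^2 = (2*Real.cos t + 1) / 3 by
      rw [hcost]
      field_simp
      nlinarith [hw2]]
    exact Real.sqrt_div hq.le 3
  have htan : Real.tan (t/2) = Real.sin (t/2) / Real.cos (t/2) := Real.tan_eq_sin_div_cos _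
  have hcos4t : Real.cos (4*t) = 2 * Real.cos (2*t) ^ 2 - 1 := by
    rw [show 4*t = 2*(2*t) by ring]; exact Real.cos_two_mul (2*t)
  have hcos2t : Real.cos (2*t) = 2 * Real.cos t ^ 2 - 1 := Real.cos_two_mul t
  have hcos3t : Real.cos (3*t) = 4 * Real.cos t ^ 3 - 3 * Real.cos t := Real.cos_three_mul t
  rw [htan, hsqrtc2, hsqrtu, hcos4t, hcos3t, hcos2t, hsint, hcost]
  rw [hcost] at hq hr
  have hr2 : Real.sqrt (2*(1 - 2*Real.sin (t/2)^2) + 1) ^ 2 = 3 - 4*Real.sin (t/2)^2 := by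
    rw [Real.sq_sqrt hq.le]; ring
  set s := Real.sin (t/2) with hs_def
  set c := Real.cos (t/2) with hc_def
  set r := Real.sqrt (2*(1 - 2*s^2) + 1) with hr_def
  set w := Real.sqrt 3 with hw_def
  field_simp
  linear_combination ((-213840000)*s^2*c^2*r^0 + (-1399680000)*s^2*c^2*r^2 + (1866240000)*s^4*c^2*r^0 + (1749600000)*s^4*c^2*r^2 + (-1399680000)*s^6*c^2*r^0 + (-690120000)*s^0*c^2*r^0 + (53460000)*s^0*c^2*r^2 + (-106920000)*s^2*c^0*r^0 + (-1506600000)*s^2*c^0*r^2 + (3615840000)*s^4*c^0*r^2 + (-2099520000)*s^6*c^0*r^2 + (-597780000)*s^0*c^0*r^0 + (199260000)*s^0*c^0*r^2 + (2080080000)*s^4*c^0*r^0 + (-3265920000)*s^6*c^0*r^0 + (1399680000)*s^8*c^0*r^0) * hcs + ((-1560060000)*s^2*c^0*r^0 + (5122440000)*s^4*c^0*r^0 + (-5715360000)*s^6*c^0*r^0 + (2099520000)*s^8*c^0*r^0 + (199260000)*s^0*c^0*r^0) * hr2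

lemma W_cont : ContinuousOn W0 (Icc (0:ℝ) (2*π/3)) := by
  have hb0 : (0:ℝ) < 2*π/3 := by positivity
  have h1 : ContinuousOn (fun x => 2 * ∫ s in (0:ℝ)..x, f0 s) (Icc (0:ℝ) (2*π/3)) := by
    apply continuousOn_const.mul
    have := intervalIntegral.continuousOn_primitive_interval' f0_intble
      (left_mem_uIcc (a := (0:ℝ)) (b := 2*π/3))
    rwa [uIcc_of_le hb0.le] at this
  have h2 : Continuous (fun x => ∫ θ in (0:ℝ)..(ph0 x), g0 θ) := by
    apply (intervalIntegral.continuous_primitive (fun a b => g0_cont.intervalIntegrable a b) 0).comp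
    exact Real.continuous_arcsin.comp (by continuity)
  have h3 : ContinuousOn Fc (Icc (0:ℝ) (2*π/3)) := by
    apply ContinuousOn.mul ?_ (Real.continuous_sqrt.comp (by continuity)).continuousOn
    apply ContinuousOn.add
    · apply continuousOn_const.mul
      exact ContinuousOn.div (by fun_prop) (by fun_prop)
        (fun t ht => (cos_half_pos ht.1 ht.2).ne')
    · fun_prop
  exact (h1.sub h2.continuousOn).sub h3

lemma W_zero : W0 0 = 0 := by
  simp [W0, ph0, Fc, A0]

lemma ph0_top : ph0 (2*π/3) = π/2 := by
  have h3 : Real.sqrt 3 ≠ 0 := by positivity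
  have : (2:ℝ)*π/3/2 = π/3 := by ring
  rw [ph0, this, Real.sin_pi_div_three]
  rw [show 2 / Real.sqrt 3 * (Real.sqrt 3 / 2) = 1 by field_simp]
  exact Real.arcsin_one

lemma Fc_top : Fc (2*π/3) = 0 := by
  have : Real.cos (2*π/3) = -(1/2) := by
    rw [show (2:ℝ)*π/3 = π - π/3 by ring, Real.cos_pi_sub, Real.cos_pi_div_three]
  rw [Fc, this]
  norm_num

end OloidAux

open OloidAux Set MeasureTheory intervalIntegral in
theorem oloid_Iyy_single_integral :
    ∫ t in (-(2*π/3))..(2*π/3),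
        (542 * Real.cos t + 322 * Real.cos (2*t) + 122 * Real.cos (3*t) +
            21 * Real.cos (4*t) + 361) * Real.tan (t/2) ^ 2 /
          (240 * Real.sqrt (2 * Real.cos t + 1)) =
      71/45 * ellipticE (3/4) - 19/90 * ellipticK (3/4) := by
  have hb0 : (0:ℝ) < 2*π/3 := by positivity
  have hint : IntervalIntegrable f0 volume 0 (2*π/3) := f0_intble
  have hint' : IntervalIntegrable f0 volume (-(2*π/3)) 0 := by
    have := (hint.comp_sub_left 0).symm
    simp only [zero_sub, zero_sub] at this
    convert this using 2 with x
    · exact (f0_even x).symm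
    · norm_num
  have hLHS : (∫ t in (-(2*π/3))..(2*π/3), f0 t) = 2 * ∫ t in (0:ℝ)..(2*π/3), f0 t := by
    rw [← integral_add_adjacent_intervals hint' hint]
    have : (∫ t in (-(2*π/3))..(0:ℝ), f0 t) = ∫ t in (0:ℝ)..(2*π/3), f0 t := by
      rw [show (∫ t in (-(2*π/3))..(0:ℝ), f0 t) = ∫ t in (-(2*π/3))..(0:ℝ), f0 (-t) by
        simp only [f0_even], integral_comp_neg]
      norm_num
    rw [this]; ring
  have hW := constant_of_has_deriv_right_zero W_cont
    (fun x hx => (hasDeriv_W x hx).hasDerivWithinAt)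
  have hWb : W0 (2*π/3) = 0 := by
    rw [hW (2*π/3) (right_mem_Icc.2 hb0.le), W_zero]
  simp only [W0, ph0_top, Fc_top] at hWb
  have hEK : (∫ θ in (0:ℝ)..(π/2), g0 θ) = 71/45 * ellipticE (3/4) - 19/90 * ellipticK (3/4) := by
    have h1 : Continuous fun θ : ℝ => Real.sqrt (1 - 3/4 * Real.sin θ ^ 2) :=
      Real.continuous_sqrt.comp (by continuity)
    have h2 : Continuous fun θ : ℝ => 1 / Real.sqrt (1 - 3/4 * Real.sin θ ^ 2) :=
      continuous_const.div h1 (fun θ => (g0_sqrt_pos θ).ne')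
    rw [ellipticE, ellipticK]
    rw [show g0 = fun θ => 71/45 * Real.sqrt (1 - 3/4 * Real.sin θ ^ 2) -
      19/90 * (1 / Real.sqrt (1 - 3/4 * Real.sin θ ^ 2)) from rfl]
    beta_reduce
    rw [integral_sub (f := fun θ : ℝ => 71/45 * Real.sqrt (1 - 3/4 * Real.sin θ ^ 2))
      (g := fun θ : ℝ => 19/90 * (1 / Real.sqrt (1 - 3/4 * Real.sin θ ^ 2)))
      ((continuous_const.mul h1).intervalIntegrable _ _)
      ((continuous_const.mul h2).intervalIntegrable _ _),
      intervalIntegral.integral_const_mul, intervalIntegral.integral_const_mul]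
  have : (∫ t in (-(2*π/3))..(2*π/3), f0 t) = 71/45 * ellipticE (3/4) - 19/90 * ellipticK (3/4) := by
    rw [hLHS, ← hEK]
    linarith [hWb]
  exact this
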